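/- Let a₁, a₂, t₁, t₂ be positive integers with gcd(a₁,a₂) = 1 and t := t₁t₂ > 1, let D₀ < 0 be an integer, and let b, b̃ be integers with 4a_i ∣ b² − D₀ for i = 1,2, b̃ ≡ b (mod 2a₁) and b̃ ≡ −b (mod 2a₂). Set a := a₁a₂ and ã := {x·a + y·(−b̃ + √D₀) : x, y ∈ ℤ} ⊂ ℂ, where √D₀ := i√|D₀|. Then every nonzero α̃ ∈ ã satisfies Nm(α̃) := |α̃|² = (xa − yb̃)² − D₀y² ≥ a; in particular, there is no α̃ ∈ ã with Nm(α̃) = a/t. (The second half of Lemma 2.7 of the paper: when t > 1 there cannot exist α̃ ∈ ã of norm a/t < a.) -/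
import Mathlib


open Complex

/-- `√D₀ := i·√|D₀|`. -/
noncomputable def sd (D₀ : ℤ) : ℂ := Complex.I * Real.sqrt (D₀.natAbs)

lemma normSq_lattice (D₀ : ℤ) (hneg : D₀ < 0) (A btil x y : ℤ) :
    Complex.normSq ((x : ℂ) * (A : ℂ) + (y : ℂ) * (-(btil : ℂ) + sd D₀)) =
      (((x * A - y * btil) ^ 2 - D₀ * y ^ 2 : ℤ) : ℝ) := by
  have hs : (Real.sqrt (D₀.natAbs)) ^ 2 = (D₀.natAbs : ℝ) :=
    Real.sq_sqrt (by positivity)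
  have hna : ((D₀.natAbs : ℕ) : ℝ) = -(D₀ : ℝ) := by
    rw [Nat.cast_natAbs, Int.cast_abs]
    exact abs_of_neg (by exact_mod_cast hneg)
  have : ((x : ℂ) * (A : ℂ) + (y : ℂ) * (-(btil : ℂ) + sd D₀)) =
      Complex.mk ((x : ℝ) * A - y * btil) ((y : ℝ) * Real.sqrt (D₀.natAbs)) := by
    apply Complex.ext <;> simp [sd, Complex.ext_iff] <;> ring
  rw [this, Complex.normSq_mk]
  push_cast
  linear_combination ((y : ℝ)) ^ 2 * hs + ((y : ℝ)) ^ 2 * hna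

/-- The second half of Lemma 2.7 of the paper: for `t = t₁t₂ > 1`, every nonzero element
`α̃ ∈ ã = ℤa + ℤ(−b̃+√D₀)` has norm `≥ a`; in particular there is no element of norm `a/t`. -/
theorem stmt_12 (D₀ : ℤ) (hneg : D₀ < 0)
    (a₁ a₂ t₁ t₂ : ℕ) (ha₁ : 0 < a₁) (ha₂ : 0 < a₂) (ht₁ : 0 < t₁) (ht₂ : 0 < t₂)
    (hcoa : Nat.Coprime a₁ a₂) (ht : 1 < t₁ * t₂)
    (b btil : ℤ)
    (hb1 : (4 * (a₁ : ℤ)) ∣ b ^ 2 - D₀) (hb2 : (4 * (a₂ : ℤ)) ∣ b ^ 2 - D₀)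
    (hbt1 : (2 * (a₁ : ℤ)) ∣ btil - b) (hbt2 : (2 * (a₂ : ℤ)) ∣ btil + b) :
    (∀ α : ℂ, (∃ x y : ℤ, α = (x : ℂ) * ((a₁ * a₂ : ℕ) : ℂ) + (y : ℂ) * (-(btil : ℂ) + sd D₀)) →
      α ≠ 0 → ((a₁ * a₂ : ℕ) : ℝ) ≤ Complex.normSq α) ∧
    ¬∃ α : ℂ, (∃ x y : ℤ, α = (x : ℂ) * ((a₁ * a₂ : ℕ) : ℂ) + (y : ℂ) * (-(btil : ℂ) + sd D₀)) ∧
      Complex.normSq α = ((a₁ * a₂ : ℕ) : ℝ) / ((t₁ * t₂ : ℕ) : ℝ) := by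
  set A : ℤ := (a₁ : ℤ) * (a₂ : ℤ) with hA
  have hApos : 0 < A := by positivity
  -- a₁ ∣ btil² - D₀, a₂ ∣ btil² - D₀
  have h1 : (a₁ : ℤ) ∣ btil ^ 2 - D₀ := by
    obtain ⟨c, hc⟩ := hbt1
    obtain ⟨d, hd⟩ := hb1
    exact ⟨c * (btil + b) * 2 + 4 * d, by linear_combination (btil + b) * hc + hd⟩
  have h2 : (a₂ : ℤ) ∣ btil ^ 2 - D₀ := by
    obtain ⟨c, hc⟩ := hbt2
    obtain ⟨d, hd⟩ := hb2
    exact ⟨c * (btil - b) * 2 + 4 * d, by linear_combination (btil - b) * hc + hd⟩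
  have hco : IsCoprime (a₁ : ℤ) (a₂ : ℤ) := by
    rw [Int.isCoprime_iff_gcd_eq_one]
    exact_mod_cast hcoa
  have hAdvd : A ∣ btil ^ 2 - D₀ := hco.mul_dvd h1 h2
  have key : ∀ x y : ℤ, A ∣ (x * A - y * btil) ^ 2 - D₀ * y ^ 2 := by
    intro x y
    have : (x * A - y * btil) ^ 2 - D₀ * y ^ 2 =
        A * (x ^ 2 * A - 2 * x * y * btil) + y ^ 2 * (btil ^ 2 - D₀) := by ring
    rw [this]
    exact dvd_add (Dvd.intro _ rfl) (Dvd.dvd.mul_left hAdvd _)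
  have hAcast : ((a₁ * a₂ : ℕ) : ℂ) = ((A : ℤ) : ℂ) := by rw [hA]; push_cast; ring
  have hAcastR : ((a₁ * a₂ : ℕ) : ℝ) = ((A : ℤ) : ℝ) := by rw [hA]; push_cast; ring
  have main : ∀ α : ℂ,
      (∃ x y : ℤ, α = (x : ℂ) * ((a₁ * a₂ : ℕ) : ℂ) + (y : ℂ) * (-(btil : ℂ) + sd D₀)) →
      α ≠ 0 → ((a₁ * a₂ : ℕ) : ℝ) ≤ Complex.normSq α := by
    intro α ⟨x, y, hxy⟩ hα
    rw [hxy, hAcast, normSq_lattice D₀ hneg A btil x y]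
    set N : ℤ := (x * A - y * btil) ^ 2 - D₀ * y ^ 2 with hN
    have hNne : N ≠ 0 := by
      intro h0
      apply hα
      rw [← Complex.normSq_eq_zero, hxy, hAcast, normSq_lattice D₀ hneg A btil x y, ← hN, h0]
      norm_num
    have hNnonneg : 0 ≤ N := by nlinarith [sq_nonneg (x * A - y * btil), sq_nonneg y]
    have : A ≤ N := Int.le_of_dvd (lt_of_le_of_ne hNnonneg (Ne.symm hNne)) (key x y)
    rw [hAcastR]
    exact_mod_cast this
  refine ⟨main, ?_⟩
  rintro ⟨α, hmem, hval⟩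
  have htR : (1 : ℝ) < ((t₁ * t₂ : ℕ) : ℝ) := by exact_mod_cast ht
  have hARpos : (0 : ℝ) < ((a₁ * a₂ : ℕ) : ℝ) := by positivity
  have hα : α ≠ 0 := by
    intro h0
    rw [h0, Complex.normSq_zero] at hval
    have : (0 : ℝ) < ((a₁ * a₂ : ℕ) : ℝ) / ((t₁ * t₂ : ℕ) : ℝ) := by positivity
    linarith [hval ▸ this]
  have hle := main α hmem hα
  rw [hval] at hle
  have : ((a₁ * a₂ : ℕ) : ℝ) / ((t₁ * t₂ : ℕ) : ℝ) < ((a₁ * a₂ : ℕ) : ℝ) := by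
    rw [div_lt_iff₀ (by linarith)]; nlinarith
  linarith
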